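/- arXiv:2408.01564 — 2 statements merged into one kernel-verified Lean document; each statement's English description precedes it below -/
import Mathlib

section
/- The central element U₀ of B is a cycle for the full differential: μ₁(U₀) = 0, where U₀ is the sum of all 2N full alternating loops of length N, namely U₀ = Σ_{i=1}^{N} ρ_i σ_{i−1} ρ_{i−1} ⋯ ρ_{i+1} σ_i + Σ_{i=1}^{N} σ_{i−1} ρ_{i−1} ⋯ σ_i ρ_i (each summand containing all N ρ-letters and all N σ-letters). -/
open scoped Classical

noncomputable section

namespace StarPaper

/-- The ground ring `R = F₂[V₀, V₁, …, V_{N+1}]`. -/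
abbrev R (N : ℕ) := MvPolynomial (Fin (N + 2)) (ZMod 2)

/-- The variable `V₀`. -/
def V0 (N : ℕ) : R N := MvPolynomial.X 0

open Fin.NatCast in
/-- The variable `V_{i}` for an index `i` counted mod `N` (so `1 ≤ i ≤ N`). -/
def Vof (N : ℕ) (z : ZMod N) : R N := MvPolynomial.X ((z.val + 1 : ℕ) : Fin (N + 2))

open Fin.NatCast in
/-- The variable `V_{N+1}`. -/
def VN1 (N : ℕ) : R N := MvPolynomial.X (((N + 1 : ℕ)) : Fin (N + 2))

/-- The Alexander grading group `ℤ^{2N}`, with coordinates indexed by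
`(i, false) ↔ ē_{2i-1}` (the `U`/odd slots) and `(i, true) ↔ ē_{2i}` (the `s`/even slots). -/
abbrev Gr (N : ℕ) := ZMod N × Bool → ℤ

/-- The standard basis vector of the Alexander grading group. -/
def gsl {N : ℕ} (p : ZMod N × Bool) : Gr N := fun x => if x = p then 1 else 0

/-- The constant grading vector `j · Σ_{k=1}^{2N} ē_k`. -/
def constG (N : ℕ) (j : ℕ) : Gr N := fun _ => (j : ℤ)

/-! ### The dual algebra `B` -/

/-- Basis words of the dual algebra `B`: idempotents `ι_i`, lone letters `ρ_i`, and
strictly alternating words `gen i l r lf` with `l+1` σ-letters `σ_i, …, σ_{i+l}`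
(composed right-to-left), all interior ρ-letters present, an optional right flanking
`ρ_i` (`r`) and an optional left flanking `ρ_{i+l+1}` (`lf`). -/
inductive BWord (N : ℕ) : Type
  | idem (i : ZMod N)
  | rho (i : ZMod N)
  | gen (i : ZMod N) (l : ℕ) (r : Bool) (lf : Bool)
  deriving DecidableEq

instance (N : ℕ) : Inhabited (BWord N) := ⟨BWord.idem 0⟩

namespace BWord
variable {N : ℕ}

/-- Initial (rightmost) idempotent. -/
def initB : BWord N → ZMod N
  | idem i => i
  | rho i => i
  | gen i _ _ _ => i

/-- Final (leftmost) idempotent. -/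
def finB : BWord N → ZMod N
  | idem i => i
  | rho i => i
  | gen i l _ _ => i + ((l + 1 : ℕ) : ZMod N)

/-- The length `ℓ(τ)`: the number of σ-letters. -/
def lenB : BWord N → ℕ
  | gen _ l _ _ => l + 1
  | _ => 0

/-- Right-flanked: the rightmost letter is a `ρ`. -/
def rFl : BWord N → Prop
  | gen _ _ r _ => r = true
  | rho _ => True
  | idem _ => False

/-- Left-flanked: the leftmost letter is a `ρ`. -/
def lFl : BWord N → Prop
  | gen _ _ _ lf => lf = true
  | rho _ => True
  | idem _ => False

/-- Multiplication of basis words of `B` (right-to-left composition, so `mulB x y = x·y`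
with `y` acting first); `none` means the product is zero.  This encodes the relations
`ρρ = 0` and `σσ = 0`. -/
def mulB : BWord N → BWord N → Option (BWord N)
  | idem i, idem j => if i = j then some (idem i) else none
  | idem i, rho j => if i = j then some (rho j) else none
  | idem i, gen j l r lf => if i = j + ((l + 1 : ℕ) : ZMod N) then some (gen j l r lf) else none
  | rho i, idem j => if i = j then some (rho i) else none
  | rho _, rho _ => none
  | rho i, gen j l r lf =>
      if i = j + ((l + 1 : ℕ) : ZMod N) ∧ lf = false then some (gen j l r true) else none
  | gen i l r lf, idem j => if j = i then some (gen i l r lf) else none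
  | gen i l r lf, rho j => if j = i ∧ r = false then some (gen i l true lf) else none
  | gen i' l' r' lf', gen i l r lf =>
      if i' = i + ((l + 1 : ℕ) : ZMod N) ∧ (lf ≠ r') then some (gen i (l + l' + 1) r lf')
      else none

end BWord

/-- The free `R`-module underlying `B`, with basis the words. -/
abbrev BMod (N : ℕ) := BWord N →₀ R N

/-- A basis word viewed as an element of `B`. -/
def ofB {N : ℕ} (w : BWord N) : BMod N := Finsupp.single w 1

/-- The full differential `μ₁` of `B` on basis words: the Leibniz differential
(`μ₁ρ_i = V_i`, `μ₁σ_i = 0`; only flanking ρ-letters contribute) for length `< N`,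
together with the window-cutting terms in the length `≥ N` cases, according to the
four flanking cases. -/
def mu1W (N : ℕ) : BWord N → BMod N
  | .idem _ => 0
  | .rho i => Vof N i • ofB (.idem i)
  | .gen i l r lf =>
      (if r then Vof N i • ofB (.gen i l false lf) else 0)
      + (if lf then Vof N (i + ((l + 1 : ℕ) : ZMod N)) • ofB (.gen i l r false) else 0)
      + (if N ≤ l + 1 ∧ lf = false then
          (VN1 N * ∏ t ∈ Finset.range (N - 1), Vof N (i + ((l + 2 - N + t : ℕ) : ZMod N))) •
            (if N ≤ l then ofB (.gen i (l - N) r true)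
             else if r then ofB (.rho i) else ofB (.idem i))
         else 0)
      + (if N ≤ l + 1 ∧ r = false then
          (VN1 N * ∏ t ∈ Finset.range (N - 1), Vof N (i + ((t + 1 : ℕ) : ZMod N))) •
            (if N ≤ l then ofB (.gen (i + (N : ZMod N)) (l - N) true lf)
             else if lf then ofB (.rho (i + (N : ZMod N))) else ofB (.idem (i + (N : ZMod N))))
         else 0)

/-- The differential `μ₁`, extended `R`-linearly to all of `B`. -/
def mu1M (N : ℕ) (x : BMod N) : BMod N := x.sum fun w c => c • mu1W N w

/-- Total length of a composable sequence of words (the list is written in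
composition order `[τ₁, …, τ_k]`). -/
def totB {N : ℕ} (l : List (BWord N)) : ℕ := (l.map BWord.lenB).sum

/-- Consecutive inputs compose (`(τ_k, …, τ₁)` is written `[τ₁, …, τ_k]`). -/
def chainB {N : ℕ} (l : List (BWord N)) : Prop :=
  l.Chain' (fun x y => x.finB = y.initB)

/-- Condition (S1): some proper top part `(τ_k, …, τ_m)`, `m > 1`, has total length `≥ N`. -/
def S1 (N : ℕ) (l : List (BWord N)) : Prop :=
  ∃ m, 1 ≤ m ∧ m < l.length ∧ N ≤ totB (l.drop m)

/-- Condition (S2): some proper bottom part `(τ_m, …, τ₁)`, `m < k`, has total length `≥ N`. -/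
def S2 (N : ℕ) (l : List (BWord N)) : Prop :=
  ∃ m, 1 ≤ m ∧ m < l.length ∧ N ≤ totB (l.take m)

/-- The product of the variables `V_λ` over the interior ρ-letters of a word. -/
def intProd (N : ℕ) : BWord N → R N
  | .gen i l _ _ => ∏ t ∈ Finset.range l, Vof N (i + ((t + 1 : ℕ) : ZMod N))
  | _ => 1

/-- Shape conditions on the terms of an allowable sequence: interior terms begin and
end with a σ-letter, `τ₁` begins with a σ (possibly ending with a ρ), and `τ_k` ends
with a σ (possibly beginning with a ρ). -/
def endsOK (N : ℕ) (l : List (BWord N)) : Prop :=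
  (∃ i li r, l.headI = BWord.gen i li r false) ∧
  (∃ i li lf, l.getLastI = BWord.gen i li false lf) ∧
  (∀ m, 0 < m → m + 1 < l.length → ∃ i li, l[m]? = some (BWord.gen i li false false))

/-- Allowable sequences (for the high-length products `μ_k`, `2 ≤ k ≤ N`). -/
def allow (N : ℕ) (l : List (BWord N)) : Prop :=
  2 ≤ l.length ∧ l.length ≤ N ∧ chainB l ∧ N ≤ totB l ∧
  ¬(S1 N l ∧ S2 N l) ∧
  ¬(l.getLastI.lFl ∧ S2 N l ∧ ¬ S1 N l) ∧
  ¬(l.headI.rFl ∧ S1 N l ∧ ¬ S2 N l) ∧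
  ¬(l.getLastI.lFl ∧ l.headI.rFl) ∧
  endsOK N l

/-- The bottom-cut term: the window of the bottom `N` σ-steps is swept out and
converted into `V_{N+1}·∏{V_λ}`, leaving the remaining top factor of `τ_k`. -/
def botTerm (N : ℕ) (l : List (BWord N)) : BMod N :=
  match l.getLastI with
  | .gen ik lk _ lfk =>
    if 1 ≤ N - totB l.dropLast ∧ N - totB l.dropLast ≤ lk then
      (VN1 N * ((l.dropLast.map (intProd N)).prod) *
        ∏ t ∈ Finset.range (N - totB l.dropLast - 1), Vof N (ik + ((t + 1 : ℕ) : ZMod N))) •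
        ofB (.gen (ik + ((N - totB l.dropLast : ℕ) : ZMod N)) (lk - (N - totB l.dropLast))
              true lfk)
    else 0
  | _ => 0

/-- The top-cut term: the window of the top `N` σ-steps is swept out, leaving the
remaining bottom factor of `τ₁`. -/
def topTerm (N : ℕ) (l : List (BWord N)) : BMod N :=
  match l.headI with
  | .gen i1 l1 r1 _ =>
    if 1 ≤ N - totB l.tail ∧ N - totB l.tail ≤ l1 then
      (VN1 N * ((l.tail.map (intProd N)).prod) *
        ∏ t ∈ Finset.range (N - totB l.tail - 1),
          Vof N (i1 + ((l1 + 1 - (N - totB l.tail) + t + 1 : ℕ) : ZMod N))) •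
        ofB (.gen i1 (l1 - (N - totB l.tail)) r1 true)
    else 0
  | _ => 0

/-- The value of a high-length product on an allowable sequence: for total length `N`
there is a single cut; for total length `> N`, the sum of the bottom-cut and top-cut
terms over the permitted cut directions (never counting from a flanked or
stretching-too-far end). -/
def highVal (N : ℕ) (l : List (BWord N)) : BMod N :=
  if totB l = N then
    (VN1 N * (l.map (intProd N)).prod) •
      ofB (if l.getLastI.lFl ∨ l.headI.rFl then BWord.rho l.headI.initB
           else BWord.idem l.headI.initB)
  else
    (if ¬ S2 N l ∧ ¬ l.headI.rFl then botTerm N l else 0)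
    + (if ¬ S1 N l ∧ ¬ l.getLastI.lFl then topTerm N l else 0)

/-- The operations `μ_k` of `B` on sequences of basis words (the list is in composition
order `[τ₁, …, τ_k]`): `μ₁` is the full differential, `μ₂` is the concatenation product
together with the high-length binary products, `μ_k` for `2 ≤ k ≤ N` the high-length
products on allowable sequences, and all other operations vanish. -/
def muB (N : ℕ) (l : List (BWord N)) : BMod N :=
  if l.length = 1 then mu1W N l.headI
  else if 2 ≤ l.length then
    (if l.length = 2 then (BWord.mulB l.getLastI l.headI).elim 0 ofB else 0)
    + (if allow N l then highVal N l else 0)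
  else 0

/-- The central element `U₀` of `B`: the sum of all `2N` full alternating loops of
length `N`, namely `Σ_{i=1}^N ρ_i σ_{i-1} ρ_{i-1} ⋯ ρ_{i+1} σ_i`
(left-flanked loops) plus `Σ_{i=1}^N σ_{i-1} ρ_{i-1} ⋯ σ_i ρ_i` (right-flanked loops),
each summand containing all `N` ρ-letters and all `N` σ-letters. -/
def U0elt (N : ℕ) : BMod N :=
  (∑ i ∈ Finset.range N, ofB (BWord.gen (i : ZMod N) (N - 1) false true))
  + ∑ i ∈ Finset.range N, ofB (BWord.gen (i : ZMod N) (N - 1) true false)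

lemma mu1M_ofB (N : ℕ) (w : BWord N) : mu1M N (ofB w) = mu1W N w := by
  simp [mu1M, ofB, Finsupp.sum_single_index]

lemma mu1M_add (N : ℕ) (x y : BMod N) : mu1M N (x + y) = mu1M N x + mu1M N y := by
  unfold mu1M
  exact Finsupp.sum_add_index (by simp) (fun w _ a b => add_smul a b (mu1W N w))

lemma self_add_self (N : ℕ) (x : BMod N) : x + x = 0 := by
  have h2 : (1 : R N) + 1 = 0 := CharTwo.add_self_eq_zero 1
  calc x + x = ((1 : R N) + 1) • x := by rw [add_smul, one_smul]
  _ = 0 := by rw [h2, zero_smul]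

lemma key (N : ℕ) (hN : 3 ≤ N) (i : ZMod N) :
    mu1W N (BWord.gen i (N - 1) false true) = mu1W N (BWord.gen i (N - 1) true false) := by
  have h1 : N - 1 + 1 = N := by omega
  have h2 : ¬ N ≤ N - 1 := by omega
  have h3 : N - 1 + 2 - N = 1 := by omega
  have h4 : ((N : ℕ) : ZMod N) = 0 := by simp
  simp only [mu1W, h1, h2, h3, h4, if_true, if_false, le_refl, and_true, and_false,
    Bool.true_eq_false, Bool.false_eq_true, if_neg, true_and, add_zero, zero_add,
    ite_false, ite_true, cond_true, cond_false]
  have hp : ∀ t ∈ Finset.range (N - 1),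
      Vof N (i + ((1 + t : ℕ) : ZMod N)) = Vof N (i + ((t + 1 : ℕ) : ZMod N)) := by
    intro t _; rw [Nat.add_comm]
  rw [Finset.prod_congr rfl hp]

/-- The central element `U₀` of `B` is a cycle for the full
differential: `μ₁(U₀) = 0`. -/
theorem U0_is_a_cycle (N : ℕ) (hN : 3 ≤ N) : mu1M N (U0elt N) = 0 := by
  unfold U0elt
  rw [mu1M_add]
  have hsum : ∀ (f : ℕ → BWord N),
      mu1M N (∑ i ∈ Finset.range N, ofB (f i)) = ∑ i ∈ Finset.range N, mu1W N (f i) := by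
    intro f
    induction (Finset.range N) using Finset.induction with
    | empty => simp [mu1M]
    | insert _ _ h ih => rw [Finset.sum_insert h, mu1M_add, mu1M_ofB, ih, Finset.sum_insert h]
  rw [hsum, hsum, ← Finset.sum_add_distrib]
  apply Finset.sum_eq_zero
  intro i _
  rw [key N hN]
  exact self_add_self N _

end StarPaper
end
end

section
/- Two-sided cut decomposition (Lemma 5.13): let (τ_k, …, τ₁), k ≥ 1, be a composable sequence of alternating words in B of total length strictly greater than N, with τ_k not left-flanked and τ₁ not right-flanked, satisfying neither (S1) nor (S2). Let i be the initial idempotent of τ₁ and j the final idempotent of τ_k, and let Λ = σ_{j−1}ρ_{j−1}σ_{j−2}⋯ρ_{i+1}σ_i be the full alternating word from i to j. Counting N σ-steps from the left end of the sequence yields a cut point inside τ₁, with remainder τ₁′ (the part of τ₁ to the right of the cut); counting N σ-steps from the right end yields a cut point inside τ_k, with remainder τ_k′ (the part of τ_k to the left of the cut). Then τ₁′ = ρ_j·Λ and τ_k′ = Λ·ρ_i; moreover for every idempotent index λ lying in both windows, a ρ_λ-letter occurs between the corresponding consecutive σ-letters in the left window if and only if it does in the right window. -/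
open scoped Classical

noncomputable section

namespace StarPaper

/-- Letters of words of `B`. -/
inductive BLet (N : ℕ)
  | sg (i : ZMod N)
  | rh (i : ZMod N)
  deriving DecidableEq

/-- The list of letters of a word, in right-to-left (composition) order. -/
def lettersOf {N : ℕ} : BWord N → List (BLet N)
  | .idem _ => []
  | .rho i => [BLet.rh i]
  | .gen i l r lf =>
      (if r then [BLet.rh i] else []) ++
      ((List.range (l + 1)).flatMap fun t =>
        (if t = 0 then [] else [BLet.rh (i + (t : ZMod N))]) ++ [BLet.sg (i + (t : ZMod N))]) ++
      (if lf then [BLet.rh (i + ((l + 1 : ℕ) : ZMod N))] else [])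

/-- All the letters of a sequence `[τ₁, …, τ_k]`, in right-to-left order. -/
def seqLetters {N : ℕ} (l : List (BWord N)) : List (BLet N) := (l.map lettersOf).flatten

/-- Is the letter a σ? -/
def isSg {N : ℕ} : BLet N → Bool
  | .sg _ => true
  | _ => false

/-- Some ρ-letter occurs between the `p`-th and `(p+1)`-st σ-letters of the letter list
(σ-letters counted from `0` starting at the right end). -/
def slotRho {N : ℕ} (L : List (BLet N)) (p : ℕ) : Prop :=
  ∃ n j, L[n]? = some (BLet.rh j) ∧ (L.take n).countP (fun a => isSg a) = p + 1

section Aux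

variable {N : ℕ}

private def seg (i : ZMod N) (t : ℕ) : List (BLet N) :=
  (if ((t : ℕ) : ZMod N) = 0 then [] else [BLet.rh (i + (t : ZMod N))]) ++
    [BLet.sg (i + (t : ZMod N))]

private def body (i : ZMod N) (l : ℕ) : List (BLet N) :=
  (List.range (l + 1)).flatMap (seg i)

private lemma lettersOf_gen (i : ZMod N) (l : ℕ) (r lf : Bool) :
    lettersOf (BWord.gen i l r lf) =
      (if r then [BLet.rh i] else []) ++ body i l ++
      (if lf then [BLet.rh (i + ((l + 1 : ℕ) : ZMod N))] else []) := by
  simp [lettersOf, body, List.flatMap_assoc]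
  rfl

private lemma body_succ (i : ZMod N) (l : ℕ) :
    body i (l + 1) = body i l ++ seg i (l + 1) := by
  simp [body, List.range_succ]

private lemma body_countP (i : ZMod N) (l : ℕ) :
    (body i l).countP (fun a => isSg a) = l + 1 := by
  induction l with
  | zero => simp [body, seg, List.range_succ, List.countP_cons, isSg]
  | succ n ih =>
    rw [body_succ, List.countP_append, ih]
    simp [seg, List.countP_cons, isSg]

private lemma body_slot (i : ZMod N) {p l : ℕ} (h : p + 1 ≤ l)
    (hz : ((p + 1 : ℕ) : ZMod N) ≠ 0) :
    ∃ n, n < (body i l).length ∧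
      (body i l)[n]? = some (BLet.rh (i + ((p + 1 : ℕ) : ZMod N))) ∧
      ((body i l).take n).countP (fun a => isSg a) = p + 1 := by
  induction l with
  | zero => omega
  | succ k ih =>
    rcases Nat.lt_or_ge (p + 1) (k + 1) with h' | h'
    · obtain ⟨m, hm, h1, h2⟩ := ih (by omega)
      refine ⟨m, ?_, ?_, ?_⟩
      · rw [body_succ, List.length_append]; omega
      · rw [body_succ, List.getElem?_append_left hm, h1]
      · rw [body_succ, List.take_append_of_le_length (le_of_lt hm), h2]
    · have hp : p = k := by omega
      subst hp
      refine ⟨(body i p).length, ?_, ?_, ?_⟩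
      · rw [body_succ, List.length_append, seg, if_neg hz]; simp
      · rw [body_succ, List.getElem?_append_right (le_refl _), Nat.sub_self, seg, if_neg hz]
        rfl
      · rw [body_succ, List.take_left, body_countP]

private lemma natCast_ne_zero_of_lt {x : ℕ} (h0 : 0 < x) (hx : x < N) :
    ((x : ℕ) : ZMod N) ≠ 0 := by
  rw [Ne, ZMod.natCast_eq_zero_iff]
  intro hd
  exact absurd (Nat.le_of_dvd h0 hd) (by omega)

private lemma countP_A_zero {r : Bool} {j : ZMod N} :
    (if r then [BLet.rh j] else ([] : List (BLet N))).countP (fun a => isSg a) = 0 := by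
  cases r <;> simp [isSg]

private lemma slotRho_gen {i : ZMod N} {l : ℕ} {r lf : Bool} {p : ℕ} (hp : p + 1 ≤ l)
    (hz : ((p + 1 : ℕ) : ZMod N) ≠ 0) :
    slotRho (lettersOf (BWord.gen i l r lf)) p := by
  obtain ⟨m, hm, hg, ht⟩ := body_slot i hp hz
  set A : List (BLet N) := if r then [BLet.rh i] else [] with hA
  set C : List (BLet N) := if lf then [BLet.rh (i + ((l + 1 : ℕ) : ZMod N))] else [] with hC
  have hlen : A.length + m < (A ++ body i l).length := by
    rw [List.length_append]; omega
  refine ⟨A.length + m, i + ((p + 1 : ℕ) : ZMod N), ?_, ?_⟩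
  · rw [lettersOf_gen, List.getElem?_append_left hlen,
      List.getElem?_append_right (Nat.le_add_right _ _), Nat.add_sub_cancel_left, hg]
  · rw [lettersOf_gen, List.take_append_of_le_length (le_of_lt hlen),
      List.take_length_add_append, List.countP_append, countP_A_zero, ht, Nat.zero_add]

private lemma countP_lettersOf (w : BWord N) :
    (lettersOf w).countP (fun a => isSg a) = w.lenB := by
  cases w with
  | idem i => simp [lettersOf, BWord.lenB]
  | rho i => simp [lettersOf, BWord.lenB, isSg]
  | gen i l r lf =>
    rw [lettersOf_gen, List.countP_append, List.countP_append, countP_A_zero, body_countP]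
    have : (if lf then [BLet.rh (i + ((l + 1 : ℕ) : ZMod N))]
        else ([] : List (BLet N))).countP (fun a => isSg a) = 0 := by
      cases lf <;> simp [isSg]
    rw [this]
    simp [BWord.lenB]

private lemma seqLetters_cons (w : BWord N) (ws : List (BWord N)) :
    seqLetters (w :: ws) = lettersOf w ++ seqLetters ws := by
  simp [seqLetters]

private lemma seqLetters_append (a b : List (BWord N)) :
    seqLetters (a ++ b) = seqLetters a ++ seqLetters b := by
  simp [seqLetters]

private lemma countP_seqLetters (ws : List (BWord N)) :
    (seqLetters ws).countP (fun a => isSg a) = totB ws := by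
  induction ws with
  | nil => simp [seqLetters, totB]
  | cons w t ih =>
    rw [seqLetters_cons, List.countP_append, ih, countP_lettersOf]
    simp [totB]

private lemma slotRho_append_left {L₁ L₂ : List (BLet N)} {p : ℕ} (h : slotRho L₁ p) :
    slotRho (L₁ ++ L₂) p := by
  obtain ⟨n, j, h1, h2⟩ := h
  have hn : n < L₁.length := (List.getElem?_eq_some_iff.mp h1).1
  refine ⟨n, j, ?_, ?_⟩
  · rw [List.getElem?_append_left hn, h1]
  · rw [List.take_append_of_le_length (le_of_lt hn), h2]

private lemma slotRho_append_right {L₁ L₂ : List (BLet N)} {p : ℕ} (h : slotRho L₂ p) :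
    slotRho (L₁ ++ L₂) (L₁.countP (fun a => isSg a) + p) := by
  obtain ⟨n, j, h1, h2⟩ := h
  refine ⟨L₁.length + n, j, ?_, ?_⟩
  · rw [List.getElem?_append_right (Nat.le_add_right _ _), Nat.add_sub_cancel_left, h1]
  · rw [List.take_length_add_append, List.countP_append, h2]
    omega

private lemma slot_head {i : ZMod N} {l : ℕ} {r lf : Bool} {p : ℕ}
    (ws : List (BWord N)) (hp : p + 1 ≤ l) (hz : ((p + 1 : ℕ) : ZMod N) ≠ 0) :
    slotRho (seqLetters (BWord.gen i l r lf :: ws)) p := by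
  rw [seqLetters_cons]
  exact slotRho_append_left (slotRho_gen hp hz)

private lemma slot_last {i : ZMod N} {l : ℕ} {r lf : Bool} {p : ℕ}
    (ws : List (BWord N)) (hp : p + 1 ≤ l) (hz : ((p + 1 : ℕ) : ZMod N) ≠ 0) :
    slotRho (seqLetters (ws ++ [BWord.gen i l r lf])) (totB ws + p) := by
  rw [seqLetters_append]
  have h2 : slotRho (seqLetters [BWord.gen i l r lf]) p := by
    have : seqLetters [BWord.gen i l r lf] = lettersOf (BWord.gen i l r lf) := by
      simp [seqLetters]
    rw [this]; exact slotRho_gen hp hz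
  have := slotRho_append_right (L₁ := seqLetters ws) h2
  rwa [countP_seqLetters] at this

private lemma finB_eq_initB_add (w : BWord N) :
    w.finB = w.initB + ((w.lenB : ℕ) : ZMod N) := by
  cases w <;> simp [BWord.finB, BWord.initB, BWord.lenB]

private lemma chain_finB {l : List (BWord N)} (h : l ≠ []) (hc : chainB l) :
    l.getLastI.finB = l.headI.initB + ((totB l : ℕ) : ZMod N) := by
  induction l with
  | nil => simp at h
  | cons w ws ih =>
    cases ws with
    | nil =>
      have h1 : (([w] : List (BWord N))).getLastI = w := by
        rw [List.getLastI_eq_getLast?, List.getLast?_eq_getLast (by simp), Option.getD_some,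
          List.getLast_singleton]
      rw [h1]
      have : totB [w] = w.lenB := by simp [totB]
      rw [this]
      exact finB_eq_initB_add w
    | cons v t =>
      have h1 : w.finB = v.initB := (List.isChain_cons_cons.mp hc).1
      have h2 := ih (by simp) (List.isChain_cons_cons.mp hc).2
      have h3 : (w :: v :: t).getLastI = (v :: t).getLastI := by
        rw [List.getLastI_eq_getLast?, List.getLastI_eq_getLast?, List.getLast?_cons_cons]
      rw [h3, h2]
      have h4 : (v :: t).headI = v := rfl
      rw [h4, ← h1, finB_eq_initB_add w]
      have h5 : totB (w :: v :: t) = w.lenB + totB (v :: t) := by simp [totB]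
      rw [h5, Nat.cast_add, show (w :: v :: t).headI = w from rfl]
      ring

private lemma cast_drop_N {a b : ℕ} (h : a = N + b) :
    ((a : ℕ) : ZMod N) = ((b : ℕ) : ZMod N) := by
  rw [h, Nat.cast_add, ZMod.natCast_self, zero_add]

private lemma mul_rho_gen {j i : ZMod N} {m : ℕ} (h : j = i + ((m + 1 : ℕ) : ZMod N)) :
    BWord.mulB (BWord.rho j) (BWord.gen i m false false)
      = some (BWord.gen i m false true) := by
  simp [BWord.mulB, h]

private lemma mul_gen_rho (i : ZMod N) (m : ℕ) :
    BWord.mulB (BWord.gen i m false false) (BWord.rho i)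
      = some (BWord.gen i m true false) := by
  simp [BWord.mulB]

end Aux

/-- Two-sided cut decomposition (Lemma 5.13).  Let `[τ₁, …, τ_k]` be a
composable sequence of alternating words of `B` of total length `L > N`, with `τ_k` not
left-flanked and `τ₁` not right-flanked, satisfying neither (S1) nor (S2); let
`i` be the initial idempotent of `τ₁`, `j` the final idempotent of `τ_k`, and
`d = L - N`.  Then counting `N` σ-steps from the left yields a cut point inside `τ₁`
whose remainder `τ₁′` (the bottom `d` σ-steps of `τ₁` together with the boundary
ρ-letter) equals `ρ_j · Λ`, and counting `N` σ-steps from the right yields a cut point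
inside `τ_k` whose remainder `τ_k′` equals `Λ · ρ_i`, where
`Λ = σ_{j-1} ρ_{j-1} ⋯ ρ_{i+1} σ_i` is the full alternating word from `i` to `j`;
moreover, for every idempotent index lying in both windows, a ρ-letter occurs between
the corresponding consecutive σ-letters in the left window iff it does in the right
window. -/

theorem two_sided_cut_decomposition (N : ℕ) (hN : 3 ≤ N) (l : List (BWord N))
    (hk : 1 ≤ l.length) (hcomp : chainB l)
    (hL : N < totB l)
    (hLf : ¬ l.getLastI.lFl) (hRf : ¬ l.headI.rFl)
    (hS1 : ¬ S1 N l) (hS2 : ¬ S2 N l) :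
    (∃ i₁ l₁ lf₁, l.headI = BWord.gen i₁ l₁ false lf₁ ∧ totB l - N ≤ l₁ ∧
      -- the remainder of the left-counted cut is `ρ_j · Λ`, where `Λ` runs from `i₁`:
      BWord.mulB (BWord.rho l.getLastI.finB) (BWord.gen i₁ (totB l - N - 1) false false)
        = some (BWord.gen i₁ (totB l - N - 1) false true)) ∧
    (∃ ik lk rk, l.getLastI = BWord.gen ik lk rk false ∧ totB l - N ≤ lk ∧
      -- the remainder of the right-counted cut starts at `i` and is `Λ · ρ_i`:
      ik + ((lk + 1 - (totB l - N) : ℕ) : ZMod N) = l.headI.initB ∧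
      BWord.mulB (BWord.gen l.headI.initB (totB l - N - 1) false false)
          (BWord.rho l.headI.initB)
        = some (BWord.gen l.headI.initB (totB l - N - 1) true false)) ∧
    (∀ pL pR : ℕ, totB l - N ≤ pL → pL + 2 ≤ totB l → pR + 2 ≤ N →
      ((pL : ZMod N) = (pR : ZMod N)) →
      (slotRho (seqLetters l) pL ↔ slotRho (seqLetters l) pR)) := by
  have hS1' : ∀ m, 1 ≤ m → m < l.length → totB (l.drop m) < N := by
    intro m h1 h2
    by_contra h
    exact hS1 ⟨m, h1, h2, le_of_not_gt h⟩
  have hS2' : ∀ m, 1 ≤ m → m < l.length → totB (l.take m) < N := by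
    intro m h1 h2
    by_contra h
    exact hS2 ⟨m, h1, h2, le_of_not_gt h⟩
  cases l with
  | nil => simp at hk
  | cons w ws =>
    cases ws with
    | nil =>
      have hgl : ([w] : List (BWord N)).getLastI = w := by
        rw [List.getLastI_eq_getLast?, List.getLast?_eq_getLast (by simp), Option.getD_some,
          List.getLast_singleton]
      have htot : totB [w] = w.lenB := by simp [totB]
      obtain ⟨i, li, r, lf, hw⟩ : ∃ a b c e, w = BWord.gen a b c e := by
        cases w with
        | gen a b c e => exact ⟨a, b, c, e, rfl⟩
        | idem a =>
          rw [htot, show (BWord.idem a : BWord N).lenB = 0 from rfl] at hL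
          omega
        | rho a =>
          rw [htot, show (BWord.rho a : BWord N).lenB = 0 from rfl] at hL
          omega
      subst hw
      have hr : r = false := by
        cases r
        · rfl
        · exact absurd rfl hRf
      subst hr
      have hlf : lf = false := by
        cases lf
        · rfl
        · rw [hgl] at hLf; exact absurd rfl hLf
      subst hlf
      have htot2 : totB [BWord.gen i li false false] = li + 1 := by
        simp [totB, BWord.lenB]
      have hhead : ([BWord.gen i li false false] : List (BWord N)).headI
          = BWord.gen i li false false := rfl
      rw [htot2] at hL
      rw [htot2, hhead, hgl]
      refine ⟨⟨i, li, false, rfl, by omega, ?_⟩, ⟨i, li, false, rfl, by omega, ?_, ?_⟩, ?_⟩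
      · apply mul_rho_gen
        rw [show (BWord.gen i li false false).finB = i + ((li + 1 : ℕ) : ZMod N) from rfl]
        congr 1
        exact cast_drop_N (by omega)
      · show i + ((li + 1 - (li + 1 - N) : ℕ) : ZMod N) = i
        rw [show li + 1 - (li + 1 - N) = N from by omega, ZMod.natCast_self, add_zero]
      · exact mul_gen_rho _ _
      · intro pL pR h1 h2 h3 h4
        have hpe : ((pL + 1 : ℕ) : ZMod N) = ((pR + 1 : ℕ) : ZMod N) := by
          rw [Nat.cast_add, Nat.cast_add, h4]
        exact iff_of_true
          (slot_head _ (by omega) (by rw [hpe]; exact natCast_ne_zero_of_lt (by omega) (by omega)))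
          (slot_head _ (by omega) (natCast_ne_zero_of_lt (by omega) (by omega)))
    | cons v t =>
      have hne : (BWord.idem 0 :: v :: t) ≠ ([] : List (BWord N)) := by simp
      clear hne
      have hne : (w :: v :: t) ≠ ([] : List (BWord N)) := by simp
      have hgl : (w :: v :: t).getLastI = (w :: v :: t).getLast hne := by
        rw [List.getLastI_eq_getLast?, List.getLast?_eq_getLast hne, Option.getD_some]
      have hdec : (w :: v :: t).dropLast ++ [(w :: v :: t).getLast hne] = w :: v :: t :=
        List.dropLast_append_getLast hne
      have htail : totB (v :: t) < N := by
        have := hS1' 1 le_rfl (by simp)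
        simpa using this
      have hw1 : totB (List.take 1 (w :: v :: t)) < N := hS2' 1 le_rfl (by simp)
      have hwlen : w.lenB < N := by simpa [totB] using hw1
      have htotsplit : totB (w :: v :: t) = w.lenB + totB (v :: t) := by simp [totB]
      have hdl_len : (w :: v :: t).dropLast.length = t.length + 1 := by
        rw [List.length_dropLast]; simp
      have htake_dl : List.take (t.length + 1) (w :: v :: t) = (w :: v :: t).dropLast := by
        conv_lhs => rw [← hdec]
        rw [show t.length + 1 = (w :: v :: t).dropLast.length from hdl_len.symm, List.take_left]
      have hdl : totB (w :: v :: t).dropLast < N := by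
        have := hS2' (t.length + 1) (by omega) (by simp)
        rwa [htake_dl] at this
      have hsplit2 : totB (w :: v :: t)
          = totB (w :: v :: t).dropLast + ((w :: v :: t).getLast hne).lenB := by
        conv_lhs => rw [← hdec]
        simp only [totB, List.map_append, List.sum_append, List.map_cons, List.map_nil,
          List.sum_cons, List.sum_nil]
        omega
      obtain ⟨i₁, l₁, r₁, lf₁, hw⟩ : ∃ a b c e, w = BWord.gen a b c e := by
        cases w with
        | gen a b c e => exact ⟨a, b, c, e, rfl⟩
        | idem a =>
          exfalso
          rw [show (BWord.idem a : BWord N).lenB = 0 from rfl] at htotsplit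
          omega
        | rho a =>
          exfalso
          rw [show (BWord.rho a : BWord N).lenB = 0 from rfl] at htotsplit
          omega
      subst hw
      have hr1 : r₁ = false := by
        cases r₁
        · rfl
        · exact absurd rfl hRf
      subst hr1
      simp only [BWord.lenB] at hwlen htotsplit
      obtain ⟨ik, lk, rk, lfk, hG⟩ :
          ∃ a b c e, (BWord.gen i₁ l₁ false lf₁ :: v :: t).getLast hne = BWord.gen a b c e := by
        cases hx : (BWord.gen i₁ l₁ false lf₁ :: v :: t).getLast hne with
        | gen a b c e => exact ⟨a, b, c, e, rfl⟩
        | idem a =>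
          exfalso
          rw [hx, show (BWord.idem a : BWord N).lenB = 0 from rfl] at hsplit2
          omega
        | rho a =>
          exfalso
          rw [hx, show (BWord.rho a : BWord N).lenB = 0 from rfl] at hsplit2
          omega
      have hlfk : lfk = false := by
        cases lfk
        · rfl
        · rw [hgl, hG] at hLf; exact absurd rfl hLf
      subst hlfk
      have hglG : (BWord.gen i₁ l₁ false lf₁ :: v :: t).getLastI = BWord.gen ik lk rk false := by
        rw [hgl, hG]
      rw [hG] at hsplit2
      simp only [BWord.lenB] at hsplit2
      have hch := chain_finB hne hcomp
      rw [hglG] at hch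
      rw [show (BWord.gen ik lk rk false).finB = ik + ((lk + 1 : ℕ) : ZMod N) from rfl,
        show (BWord.gen i₁ l₁ false lf₁ :: v :: t).headI.initB = i₁ from rfl] at hch
      refine ⟨⟨i₁, l₁, lf₁, rfl, by omega, ?_⟩,
        ⟨ik, lk, rk, hglG, by omega, ?_, mul_gen_rho _ _⟩, ?_⟩
      · apply mul_rho_gen
        rw [hglG,
          show (BWord.gen ik lk rk false).finB = ik + ((lk + 1 : ℕ) : ZMod N) from rfl, hch]
        congr 1
        exact cast_drop_N (by omega)
      · rw [show (BWord.gen i₁ l₁ false lf₁ :: v :: t).headI.initB = i₁ from rfl]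
        have hcst : ((lk + 1 - (totB (BWord.gen i₁ l₁ false lf₁ :: v :: t) - N) : ℕ) : ZMod N)
            + ((totB (BWord.gen i₁ l₁ false lf₁ :: v :: t) : ℕ) : ZMod N)
            = ((lk + 1 : ℕ) : ZMod N) := by
          rw [← Nat.cast_add]
          exact cast_drop_N (by omega)
        linear_combination hch + hcst
      · intro pL pR h1 h2 h3 h4
        have hmod : pL % N = pR % N := (ZMod.natCast_eq_natCast_iff _ _ _).mp h4
        have hsplit : pL = pR ∨ pL = pR + N := by
          have hpR : pR % N = pR := Nat.mod_eq_of_lt (by omega)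
          rcases Nat.lt_or_ge pL N with hc | hc
          · left
            rw [Nat.mod_eq_of_lt hc, hpR] at hmod
            exact hmod
          · right
            have hmodL : pL % N = pL - N := by
              rw [Nat.mod_eq_sub_mod hc, Nat.mod_eq_of_lt (by omega)]
            rw [hmodL, hpR] at hmod
            omega
        rcases hsplit with he | he
        · rw [he]
        · apply iff_of_true
          · have hdw : l₁ + 1 ≤ totB ((BWord.gen i₁ l₁ false lf₁ :: v :: t)).dropLast := by
              rw [List.dropLast_cons₂]; simp [totB, BWord.lenB]
            have hs : pL - totB ((BWord.gen i₁ l₁ false lf₁ :: v :: t)).dropLast + 1 ≤ lk := by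
              omega
            have hsl := slot_last (i := ik) (l := lk) (r := rk) (lf := false)
              ((BWord.gen i₁ l₁ false lf₁ :: v :: t)).dropLast hs
              (natCast_ne_zero_of_lt (by omega) (by omega))
            rw [show (BWord.gen i₁ l₁ false lf₁ :: v :: t).dropLast ++ [BWord.gen ik lk rk false]
                = BWord.gen i₁ l₁ false lf₁ :: v :: t from by rw [← hG]; exact hdec] at hsl
            have heq : totB ((BWord.gen i₁ l₁ false lf₁ :: v :: t)).dropLast
                + (pL - totB ((BWord.gen i₁ l₁ false lf₁ :: v :: t)).dropLast) = pL := by omega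
            rwa [heq] at hsl
          · exact slot_head _ (by omega) (natCast_ne_zero_of_lt (by omega) (by omega))

end StarPaper
end
end
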